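/- Let E and X be finite sets of equations and variables, var : E → Finset X, and φ(M) = |M| − |var(M)| for M ⊆ E, where var(M) = ⋃_{e∈M} var(e). If M is an MSO set, i.e., a PSO set none of whose proper subsets is PSO, then φ(M) = 1. -/
import Mathlib


open Finset

/-- The structural redundancy `φ(M) = |M| − |var(M)|` (as an integer). -/
def red {E X : Type*} [DecidableEq X] (var : E → Finset X) (M : Finset E) : ℤ :=
  (M.card : ℤ) - (M.biUnion var).card

/-- A set `M` is proper structurally overdetermined (PSO) if it is nonempty and every
proper subset has strictly smaller redundancy. -/
def IsPSO {E X : Type*} [DecidableEq X] (var : E → Finset X) (M : Finset E) : Prop :=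
  M.Nonempty ∧ ∀ M' ⊂ M, red var M' < red var M

/-- A PSO set is minimal structurally overdetermined (MSO) if no proper subset is PSO. -/
def IsMSO {E X : Type*} [DecidableEq X] (var : E → Finset X) (M : Finset E) : Prop :=
  IsPSO var M ∧ ∀ M' ⊂ M, ¬ IsPSO var M'

/-- Any set with positive redundancy contains a PSO subset. -/
lemma exists_pso_subset {E X : Type*} [DecidableEq X] (var : E → Finset X) :
    ∀ S : Finset E, 1 ≤ red var S → ∃ N ⊆ S, IsPSO var N := by
  intro S
  induction S using Finset.strongInductionOn with
  | _ S ih =>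
    intro hS
    by_cases h : IsPSO var S
    · exact ⟨S, subset_rfl, h⟩
    · have hne : S.Nonempty := by
        rcases S.eq_empty_or_nonempty with rfl | hne
        · simp [red] at hS
        · exact hne
      rw [IsPSO, not_and] at h
      obtain ⟨S', hS', hred⟩ := by
        have := h hne
        push_neg at this
        exact this
      obtain ⟨N, hN, hp⟩ := ih S' hS' (le_trans hS hred)
      exact ⟨N, hN.trans hS'.subset, hp⟩

/-- Every MSO set has redundancy one. -/
theorem stmt16_MSO_has_redundancy_one
    {E X : Type*} [Fintype E] [Fintype X] [DecidableEq E] [DecidableEq X]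
    (var : E → Finset X) (M : Finset E) (hM : IsMSO var M) :
    red var M = 1 := by
  obtain ⟨⟨hne, hpso⟩, hmin⟩ := hM
  have h0 : red var (∅ : Finset E) = 0 := by simp [red]
  have h1 : 1 ≤ red var M := by
    have := hpso ∅ (Finset.empty_ssubset.mpr hne)
    omega
  by_contra hne1
  have h2 : 2 ≤ red var M := by omega
  obtain ⟨e, he⟩ := hne
  have hsub : M.erase e ⊂ M := Finset.erase_ssubset he
  have hcard : (M.erase e).card = M.card - 1 := Finset.card_erase_of_mem he
  have hcardpos : 1 ≤ M.card := Finset.card_pos.mpr ⟨e, he⟩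
  have hvar : ((M.erase e).biUnion var).card ≤ (M.biUnion var).card :=
    Finset.card_le_card (Finset.biUnion_subset_biUnion_of_subset_left _ hsub.subset)
  have hred : 1 ≤ red var (M.erase e) := by
    unfold red at h2 ⊢
    rw [hcard]
    push_cast [Nat.cast_sub hcardpos] at *
    omega
  obtain ⟨N, hN, hNpso⟩ := exists_pso_subset var (M.erase e) hred
  exact hmin N (lt_of_le_of_lt hN hsub) hNpso
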